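/- arXiv:2404.07041 — 3 statements merged into one kernel-verified Lean document; each statement's English description precedes it below -/
import Mathlib

section
/- Let T > 0, let K : ℝ × ℝ → ℝ be continuous, let a : ℝ → ℝ be continuous with a(0) ≠ 0, let α be a constant with 0 < α < 1, let ε ∈ (0,1), let l : ℝ → ℝ be continuous with |a(t) − a(0)| ≤ l(t)·|t|^ε for all t ∈ [−T, T], and let 0 < q < 1 satisfy |a(t)|·α^ε ≤ q·|a(0)| for all t ∈ [−T, T]. Then for every natural number n, the number λ_n = a(0)·α^n is an eigenvalue of the integral-functional operator A: that is, there exists a continuous function x : [−T, T] → ℝ, not identically zero, such that a(0)·α^n · x(t) = ∫_0^t K(t,s)·x(s) ds + a(t)·x(α·t) for all t ∈ [−T, T]. -/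
open intervalIntegral Set Filter Topology

lemma aux_integral_exp_mul (aa b c : ℝ) (hc : c ≠ 0) :
    ∫ s in aa..b, Real.exp (c*s) = (Real.exp (c*b) - Real.exp (c*aa))/c := by
  rw [intervalIntegral.integral_comp_mul_left (fun x => Real.exp x) hc]
  simp
  field_simp

lemma aux_abs_integral_le (γ : ℝ) (hγ : 0 < γ) (t : ℝ) (g : ℝ → ℝ)
    (hg : Continuous g) (D : ℝ) (hD : 0 ≤ D)
    (hb : ∀ s ∈ Set.uIcc 0 t, |g s| ≤ D * Real.exp (γ * |s|)) :
    |∫ s in (0:ℝ)..t, g s| ≤ D * Real.exp (γ * |t|) / γ := by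
  have hexp1 : (1:ℝ) ≤ Real.exp (γ * |t|) := by
    rw [← Real.exp_zero]
    exact Real.exp_le_exp.2 (by positivity)
  rcases le_total 0 t with ht | ht
  · have habs : |t| = t := abs_of_nonneg ht
    calc |∫ s in (0:ℝ)..t, g s| ≤ ∫ s in (0:ℝ)..t, |g s| :=
          intervalIntegral.abs_integral_le_integral_abs ht
      _ ≤ ∫ s in (0:ℝ)..t, D * Real.exp (γ * s) := by
          apply intervalIntegral.integral_mono_on ht
            (hg.abs.intervalIntegrable _ _)
            ((by fun_prop : Continuous fun s => D * Real.exp (γ*s)).intervalIntegrable _ _)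
          intro s hs
          have hs' : s ∈ Set.uIcc 0 t := by
            rw [Set.uIcc_of_le ht]; exact hs
          have : |s| = s := abs_of_nonneg hs.1
          simpa [this] using hb s hs'
      _ = D * ((Real.exp (γ*t) - Real.exp (γ*0))/γ) := by
          rw [intervalIntegral.integral_const_mul, aux_integral_exp_mul _ _ _ (ne_of_gt hγ)]
      _ ≤ D * Real.exp (γ * |t|) / γ := by
          rw [habs]
          rw [mul_div_assoc]
          gcongr
          simp [Real.exp_pos]
  · have habs : |t| = -t := abs_of_nonpos ht
    rw [intervalIntegral.integral_symm t 0, abs_neg]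
    calc |∫ s in t..(0:ℝ), g s| ≤ ∫ s in t..(0:ℝ), |g s| :=
          intervalIntegral.abs_integral_le_integral_abs ht
      _ ≤ ∫ s in t..(0:ℝ), D * Real.exp (-γ * s) := by
          apply intervalIntegral.integral_mono_on ht
            (hg.abs.intervalIntegrable _ _)
            ((by fun_prop : Continuous fun s => D * Real.exp (-γ*s)).intervalIntegrable _ _)
          intro s hs
          have hs' : s ∈ Set.uIcc 0 t := by
            rw [Set.uIcc_of_ge ht]; exact hs
          have h2 : |s| = -s := abs_of_nonpos hs.2
          have h3 := hb s hs'
          rw [h2, (by ring : γ * -s = -γ * s)] at h3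
          exact h3
      _ = D * ((Real.exp (-γ*0) - Real.exp (-γ*t))/(-γ)) := by
          rw [intervalIntegral.integral_const_mul, aux_integral_exp_mul _ _ _ (by linarith : -γ ≠ 0)]
      _ ≤ D * Real.exp (γ * |t|) / γ := by
          rw [habs]
          have : (Real.exp (-γ*0) - Real.exp (-γ*t))/(-γ) = (Real.exp (-γ*t) - 1)/γ := by
            rw [mul_zero, Real.exp_zero]
            rw [div_eq_div_iff (by linarith) (by linarith)]
            ring
          rw [this, mul_div_assoc, (by ring : γ * -t = -γ * t)]
          gcongr
          simp [Real.exp_pos]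

set_option maxHeartbeats 2000000 in
/-- Eigenvalues of the integral-functional Volterra operator
`(A x)(t) = ∫_0^t K(t,s) x(s) ds + a(t) x(α t)` on `C[-T,T]`:
under the stated conditions, `λ_n = a(0) α^n` is an eigenvalue for every `n`. -/
theorem eigenvalues_of_integral_functional_operator
    (T : ℝ) (hT : 0 < T)
    (K : ℝ × ℝ → ℝ) (hK : Continuous K)
    (a : ℝ → ℝ) (ha : Continuous a) (ha0 : a 0 ≠ 0)
    (α : ℝ) (hα0 : 0 < α) (hα1 : α < 1)
    (ε : ℝ) (hε : ε ∈ Set.Ioo (0 : ℝ) 1)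
    (l : ℝ → ℝ) (hl : Continuous l)
    (hal : ∀ t ∈ Set.Icc (-T) T, |a t - a 0| ≤ l t * |t| ^ ε)
    (q : ℝ) (hq0 : 0 < q) (hq1 : q < 1)
    (haq : ∀ t ∈ Set.Icc (-T) T, |a t| * α ^ ε ≤ q * |a 0|) :
    ∀ n : ℕ, ∃ x : ℝ → ℝ,
      ContinuousOn x (Set.Icc (-T) T) ∧
      (∃ t ∈ Set.Icc (-T) T, x t ≠ 0) ∧
      ∀ t ∈ Set.Icc (-T) T,
        a 0 * α ^ n * x t = (∫ s in (0 : ℝ)..t, K (t, s) * x s) + a t * x (α * t) := by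
  obtain ⟨hε0, hε1⟩ := hε
  intro n
  set lam : ℝ := a 0 * α ^ n with hlam_def
  have hαn : (0:ℝ) < α ^ n := pow_pos hα0 n
  have hlam0 : lam ≠ 0 := mul_ne_zero ha0 (ne_of_gt hαn)
  have ha0pos : 0 < |a 0| := abs_pos.2 ha0
  have hlamabs : |lam| = |a 0| * α ^ n := by
    rw [hlam_def, abs_mul, abs_of_pos hαn]
  have hlampos : 0 < |lam| := abs_pos.2 hlam0
  -- membership helper
  have hmem : ∀ s t : ℝ, |s| ≤ |t| → t ∈ Set.Icc (-T) T → s ∈ Set.Icc (-T) T := by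
    intro s t hst ht
    rw [Set.mem_Icc, ← abs_le] at *
    exact hst.trans ht
  have habs_le : ∀ t : ℝ, ∀ s ∈ Set.uIcc 0 t, |s| ≤ |t| := by
    intro t s hs
    rcases le_total 0 t with h | h
    · rw [Set.uIcc_of_le h] at hs
      rw [abs_of_nonneg hs.1, abs_of_nonneg h]; exact hs.2
    · rw [Set.uIcc_of_ge h] at hs
      rw [abs_of_nonpos hs.2, abs_of_nonpos h]; linarith [hs.1]
  have huIcc_sub : ∀ t ∈ Set.Icc (-T) T, Set.uIcc 0 t ⊆ Set.Icc (-T) T := by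
    intro t ht s hs
    exact hmem s t (habs_le t s hs) ht
  -- bound on K
  obtain ⟨M0, hM0⟩ : ∃ M, ∀ p ∈ (Set.Icc (-T) T ×ˢ Set.Icc (-T) T), ‖K p‖ ≤ M :=
    (isCompact_Icc.prod isCompact_Icc).exists_bound_of_continuousOn hK.continuousOn
  set M := max M0 1 with hM_def
  have hM1 : (1:ℝ) ≤ M := le_max_right _ _
  have hMpos : (0:ℝ) < M := lt_of_lt_of_le one_pos hM1
  have hKb : ∀ t ∈ Set.Icc (-T) T, ∀ s ∈ Set.Icc (-T) T, |K (t,s)| ≤ M := by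
    intro t ht s hs
    exact le_trans (hM0 _ (Set.mk_mem_prod ht hs)) (le_max_left _ _)
  -- bound on l
  obtain ⟨L0, hL0⟩ : ∃ L, ∀ t ∈ Set.Icc (-T) T, ‖l t‖ ≤ L :=
    isCompact_Icc.exists_bound_of_continuousOn hl.continuousOn
  set L := max L0 0 with hL_def
  have hLnn : (0:ℝ) ≤ L := le_max_right _ _
  have hlb : ∀ t ∈ Set.Icc (-T) T, l t ≤ L := by
    intro t ht
    exact (le_abs_self _).trans ((hL0 t ht).trans (le_max_left _ _))
  -- contraction constants
  have h1q : (0:ℝ) < 1 - q := by linarith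
  set γ := 2*M/((1-q)*|lam|) with hγ_def
  have hγpos : 0 < γ := by positivity
  have hMγ : M/γ = (1-q)*|lam|/2 := by
    rw [hγ_def]
    field_simp
  set θ := (1+q)/2 with hθ_def
  have hθ0 : (0:ℝ) ≤ θ := by rw [hθ_def]; linarith
  have hθ1 : θ < 1 := by rw [hθ_def]; linarith
  -- weight
  set W : ℝ → ℝ := fun t => |t|^n * |t|^ε * Real.exp (γ * |t|) with hW_def
  have hW0 : ∀ t, 0 ≤ W t := by intro t; simp only [hW_def]; positivity
  have hexp1 : ∀ t : ℝ, (1:ℝ) ≤ Real.exp (γ * |t|) := by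
    intro t
    rw [← Real.exp_zero]
    exact Real.exp_le_exp.2 (by positivity)
  -- the Picard iterates
  set X : ℕ → ℝ → ℝ := fun k => Nat.rec (fun t => t^n)
    (fun _ xk t => ((∫ s in (0:ℝ)..t, K (t, s) * xk s) + a t * xk (α * t)) / lam) k
    with hX_def
  have hX0 : ∀ t, X 0 t = t^n := fun t => rfl
  have hXs : ∀ k t, X (k+1) t
      = ((∫ s in (0:ℝ)..t, K (t, s) * X k s) + a t * X k (α * t)) / lam := fun k t => rfl
  have hXc : ∀ k, Continuous (X k) := by
    intro k
    induction k with
    | zero => exact continuous_pow n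
    | succ k ih =>
      have h1 : Continuous fun t => ∫ s in (0:ℝ)..t, K (t, s) * X k s := by
        apply intervalIntegral.continuous_parametric_intervalIntegral_of_continuous
          (f := fun t s => K (t, s) * X k s) _ continuous_id
        have huncur : Function.uncurry (fun t s : ℝ => K (t, s) * X k s)
            = fun p : ℝ × ℝ => K p * X k p.2 := rfl
        rw [huncur]
        exact hK.mul (ih.comp continuous_snd)
      exact (h1.add (ha.mul (ih.comp (continuous_const.mul continuous_id)))).div_const lam
  -- the differences
  set d : ℕ → ℝ → ℝ := fun k t => X (k+1) t - X k t with hd_def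
  have hdc : ∀ k, Continuous (d k) := fun k => (hXc (k+1)).sub (hXc k)
  have hds : ∀ k t, d (k+1) t
      = ((∫ s in (0:ℝ)..t, K (t, s) * d k s) + a t * d k (α * t)) / lam := by
    intro k t
    have hi1 : IntervalIntegrable (fun s => K (t,s) * X (k+1) s) MeasureTheory.volume 0 t :=
      (Continuous.intervalIntegrable
        ((hK.comp (continuous_const.prodMk continuous_id)).mul (hXc (k+1))) _ _)
    have hi2 : IntervalIntegrable (fun s => K (t,s) * X k s) MeasureTheory.volume 0 t :=
      (Continuous.intervalIntegrable
        ((hK.comp (continuous_const.prodMk continuous_id)).mul (hXc k)) _ _)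
    have hsub : (∫ s in (0:ℝ)..t, K (t,s) * X (k+1) s) - ∫ s in (0:ℝ)..t, K (t,s) * X k s
        = ∫ s in (0:ℝ)..t, K (t,s) * d k s := by
      rw [← intervalIntegral.integral_sub hi1 hi2]
      congr 1
      ext s
      simp only [hd_def]
      ring
    show X (k+2) t - X (k+1) t = _
    rw [hXs (k+1) t, hXs k t, div_sub_div_same]
    congr 1
    rw [← hsub, hd_def]
    ring
  -- the core contraction estimate
  have hcore : ∀ (v : ℝ → ℝ), Continuous v → ∀ B : ℝ, 0 ≤ B →
      (∀ u ∈ Set.Icc (-T) T, |v u| ≤ B * W u) → ∀ t ∈ Set.Icc (-T) T,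
      |((∫ s in (0:ℝ)..t, K (t, s) * v s) + a t * v (α * t)) / lam| ≤ θ * B * W t := by
    intro v hv B hB hvb t ht
    have htT : |t| ≤ T := by rw [abs_le]; exact ⟨ht.1, ht.2⟩
    -- integral part
    have hIb : |∫ s in (0:ℝ)..t, K (t,s) * v s|
        ≤ (M * B * (|t|^n * |t|^ε)) * Real.exp (γ * |t|) / γ := by
      apply aux_abs_integral_le γ hγpos t _
        ((hK.comp (continuous_const.prodMk continuous_id)).mul hv) _ (by positivity)
      intro s hs
      have hsle : |s| ≤ |t| := habs_le t s hs
      have hsI : s ∈ Set.Icc (-T) T := hmem s t hsle ht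
      calc |K (t,s) * v s| = |K (t,s)| * |v s| := abs_mul _ _
        _ ≤ M * (B * W s) :=
            mul_le_mul (hKb t ht s hsI) (hvb s hsI) (abs_nonneg _) (le_of_lt hMpos)
        _ = (M * B) * W s := by ring
        _ ≤ (M * B) * ((|t|^n * |t|^ε) * Real.exp (γ * |s|)) := by
            apply mul_le_mul_of_nonneg_left _ (by positivity)
            have h1 : |s|^n ≤ |t|^n := pow_le_pow_left₀ (abs_nonneg s) hsle n
            have h2 : |s|^ε ≤ |t|^ε := Real.rpow_le_rpow (abs_nonneg s) hsle hε0.le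
            simp only [hW_def]
            exact mul_le_mul (mul_le_mul h1 h2 (Real.rpow_nonneg (abs_nonneg s) ε)
              (pow_nonneg (abs_nonneg t) n)) le_rfl (Real.exp_pos _).le (by positivity)
        _ = (M * B * (|t|^n * |t|^ε)) * Real.exp (γ * |s|) := by ring
    have hIb' : |∫ s in (0:ℝ)..t, K (t,s) * v s| ≤ (M/γ) * B * W t := by
      calc |∫ s in (0:ℝ)..t, K (t,s) * v s|
          ≤ (M * B * (|t|^n * |t|^ε)) * Real.exp (γ * |t|) / γ := hIb
        _ = (M/γ) * B * W t := by simp only [hW_def]; ring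
    -- functional part
    have hαtmem : α * t ∈ Set.Icc (-T) T := by
      apply hmem _ t _ ht
      rw [abs_mul, abs_of_pos hα0]
      calc α * |t| ≤ 1 * |t| := mul_le_mul_of_nonneg_right hα1.le (abs_nonneg t)
        _ = |t| := one_mul _
    have hWαt : W (α*t) ≤ α^n * α^ε * (|t|^n * |t|^ε * Real.exp (γ*|t|)) := by
      simp only [hW_def]
      have habsα : |α*t| = α*|t| := by rw [abs_mul, abs_of_pos hα0]
      rw [habsα, mul_pow, Real.mul_rpow hα0.le (abs_nonneg t)]
      have h9 : α*|t| ≤ |t| := by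
        calc α * |t| ≤ 1 * |t| := mul_le_mul_of_nonneg_right hα1.le (abs_nonneg t)
          _ = |t| := one_mul _
      have hexp : Real.exp (γ*(α*|t|)) ≤ Real.exp (γ*|t|) :=
        Real.exp_le_exp.2 (mul_le_mul_of_nonneg_left h9 hγpos.le)
      rw [show α^n*α^ε*(|t|^n*|t|^ε*Real.exp (γ*|t|))
        = (α^n*|t|^n)*(α^ε*|t|^ε)*Real.exp (γ*|t|) from by ring]
      gcongr
    have hFb : |a t * v (α*t)| ≤ q * |lam| * B * W t := by
      calc |a t * v (α*t)| = |a t| * |v (α*t)| := abs_mul _ _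
        _ ≤ |a t| * (B * W (α*t)) :=
            mul_le_mul_of_nonneg_left (hvb _ hαtmem) (abs_nonneg _)
        _ ≤ |a t| * (B * (α^n * α^ε * (|t|^n * |t|^ε * Real.exp (γ*|t|)))) := by
            gcongr
        _ = (|a t| * α^ε) * (α^n * B * (|t|^n * |t|^ε * Real.exp (γ*|t|))) := by ring
        _ ≤ (q * |a 0|) * (α^n * B * (|t|^n * |t|^ε * Real.exp (γ*|t|))) := by
            apply mul_le_mul_of_nonneg_right (haq t ht)
            positivity
        _ = q * |lam| * B * W t := by rw [hlamabs, hW_def]; ring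
    rw [abs_div, div_le_iff₀ hlampos]
    calc |(∫ s in (0:ℝ)..t, K (t, s) * v s) + a t * v (α * t)|
        ≤ |∫ s in (0:ℝ)..t, K (t, s) * v s| + |a t * v (α * t)| := abs_add_le _ _
      _ ≤ (M/γ) * B * W t + q * |lam| * B * W t := add_le_add hIb' hFb
      _ = θ * B * W t * |lam| := by rw [hMγ, hθ_def]; ring
  -- the base estimate
  set C : ℝ := M*T^(1-ε)/|lam| + L/|a 0| with hC_def
  have hC0 : 0 ≤ C := by rw [hC_def]; positivity
  have hCd : ∀ t ∈ Set.Icc (-T) T, |d 0 t| ≤ C * W t := by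
    intro t ht
    have htT : |t| ≤ T := by rw [abs_le]; exact ⟨ht.1, ht.2⟩
    have hd0 : d 0 t = (∫ s in (0:ℝ)..t, K (t,s) * s^n)/lam + t^n * ((a t - a 0)/(a 0)) := by
      have e1 : d 0 t = ((∫ s in (0:ℝ)..t, K (t,s) * s^n) + a t * (α*t)^n)/lam - t^n := rfl
      rw [e1, hlam_def, mul_pow]
      field_simp
      ring
    have h1 : |∫ s in (0:ℝ)..t, K (t,s) * s^n| ≤ M * |t|^n * |t| := by
      have := intervalIntegral.norm_integral_le_of_norm_le_const
        (C := M * |t|^n) (f := fun s => K (t,s) * s^n) (a := (0:ℝ)) (b := t) ?_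
      · simpa using this
      · intro s hs
        have hs' : s ∈ Set.uIcc 0 t := Set.uIoc_subset_uIcc hs
        have hsle : |s| ≤ |t| := habs_le t s hs'
        have hsI : s ∈ Set.Icc (-T) T := hmem s t hsle ht
        rw [Real.norm_eq_abs, abs_mul, abs_pow]
        exact mul_le_mul (hKb t ht s hsI) (pow_le_pow_left₀ (abs_nonneg s) hsle n)
          (pow_nonneg (abs_nonneg s) n) (le_of_lt hMpos)
    have h2 : |t| ≤ T^(1-ε) * |t|^ε := by
      have he1 : (1-ε) + ε = (1:ℝ) := by ring
      calc |t| = |t|^((1-ε)+ε) := by rw [he1, Real.rpow_one]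
        _ = |t|^(1-ε) * |t|^ε := Real.rpow_add' (abs_nonneg t) (by rw [he1]; norm_num)
        _ ≤ T^(1-ε) * |t|^ε := mul_le_mul_of_nonneg_right
            (Real.rpow_le_rpow (abs_nonneg t) htT (by linarith : (0:ℝ) ≤ 1-ε))
            (Real.rpow_nonneg (abs_nonneg t) ε)
    have h3 : |t^n * ((a t - a 0)/(a 0))| ≤ (L/|a 0|) * (|t|^n * |t|^ε) := by
      rw [abs_mul, abs_div, abs_pow]
      have h4 : |a t - a 0| ≤ L * |t|^ε :=
        (hal t ht).trans (mul_le_mul_of_nonneg_right (hlb t ht)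
          (Real.rpow_nonneg (abs_nonneg t) ε))
      calc |t|^n * (|a t - a 0|/|a 0|) ≤ |t|^n * ((L * |t|^ε)/|a 0|) := by gcongr
        _ = (L/|a 0|) * (|t|^n * |t|^ε) := by ring
    calc |d 0 t| ≤ |(∫ s in (0:ℝ)..t, K (t,s) * s^n)/lam| + |t^n * ((a t - a 0)/(a 0))| := by
          rw [hd0]; exact abs_add_le _ _
      _ ≤ (M * |t|^n * |t|)/|lam| + (L/|a 0|) * (|t|^n * |t|^ε) := by
          refine add_le_add ?_ h3
          rw [abs_div]
          gcongr
      _ ≤ (M*T^(1-ε)/|lam|) * (|t|^n * |t|^ε) + (L/|a 0|) * (|t|^n * |t|^ε) := by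
          refine add_le_add ?_ le_rfl
          have h5 : M * |t|^n * |t| ≤ M*T^(1-ε) * (|t|^n * |t|^ε) := by
            have h6 := mul_le_mul_of_nonneg_left h2 (by positivity : (0:ℝ) ≤ M*|t|^n)
            calc M * |t|^n * |t| = M*|t|^n * |t| := by ring
              _ ≤ M*|t|^n * (T^(1-ε) * |t|^ε) := h6
              _ = M*T^(1-ε) * (|t|^n * |t|^ε) := by ring
          rw [div_mul_eq_mul_div]
          gcongr
      _ = C * (|t|^n * |t|^ε) := by rw [hC_def]; ring
      _ ≤ C * W t := by
          simp only [hW_def]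
          nlinarith [mul_nonneg (mul_nonneg hC0 (mul_nonneg (pow_nonneg (abs_nonneg t) n)
            (Real.rpow_nonneg (abs_nonneg t) ε))) (sub_nonneg.2 (hexp1 t))]
  -- the geometric estimate by induction
  have hdk : ∀ k, ∀ t ∈ Set.Icc (-T) T, |d k t| ≤ C * θ^k * W t := by
    intro k
    induction k with
    | zero =>
      intro t ht
      simpa using hCd t ht
    | succ k ih =>
      intro t ht
      have hcc := hcore (d k) (hdc k) (C*θ^k) (by positivity) ih t ht
      rw [hds k t]
      calc |((∫ s in (0:ℝ)..t, K (t, s) * d k s) + a t * d k (α * t)) / lam|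
          ≤ θ * (C * θ^k) * W t := hcc
        _ = C * θ^(k+1) * W t := by ring
  -- uniform convergence of the series
  set Wmax : ℝ := T^n * T^ε * Real.exp (γ*T) with hWmax_def
  have hWle : ∀ t ∈ Set.Icc (-T) T, W t ≤ Wmax := by
    intro t ht
    have htT : |t| ≤ T := by rw [abs_le]; exact ⟨ht.1, ht.2⟩
    simp only [hW_def, hWmax_def]
    have h1 : |t|^n ≤ T^n := pow_le_pow_left₀ (abs_nonneg t) htT n
    have h2 : |t|^ε ≤ T^ε := Real.rpow_le_rpow (abs_nonneg t) htT hε0.le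
    have h3 : Real.exp (γ*|t|) ≤ Real.exp (γ*T) :=
      Real.exp_le_exp.2 (mul_le_mul_of_nonneg_left htT hγpos.le)
    have h4 : (0:ℝ) ≤ |t|^ε := Real.rpow_nonneg (abs_nonneg t) ε
    exact mul_le_mul (mul_le_mul h1 h2 h4 (pow_nonneg hT.le n)) h3
      (Real.exp_pos _).le (by positivity)
  have hWmax0 : 0 ≤ Wmax := by simp only [hWmax_def]; positivity
  have hsumu : Summable (fun k : ℕ => (C*Wmax) * θ^k) :=
    (summable_geometric_of_lt_one hθ0 hθ1).mul_left _
  set S : ℝ → ℝ := fun t => ∑' k, d k t with hS_def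
  have htu : TendstoUniformlyOn (fun m t => ∑ k ∈ Finset.range m, d k t) S
      atTop (Set.Icc (-T) T) := by
    apply tendstoUniformlyOn_tsum_nat hsumu
    intro k t ht
    rw [Real.norm_eq_abs]
    calc |d k t| ≤ C * θ^k * W t := hdk k t ht
      _ ≤ C * θ^k * Wmax := by
          apply mul_le_mul_of_nonneg_left (hWle t ht)
          positivity
      _ = (C*Wmax) * θ^k := by ring
  have hpart : ∀ (m : ℕ) (t : ℝ), ∑ k ∈ Finset.range m, d k t = X m t - t^n := by
    intro m t
    have := Finset.sum_range_sub (f := fun k => X k t) m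
    simp only [hd_def]
    rw [this, hX0]
  set x : ℝ → ℝ := fun t => t^n + S t with hx_def
  have hconst : TendstoUniformlyOn (fun (_ : ℕ) (t : ℝ) => t^n) (fun t : ℝ => t^n)
      atTop (Set.Icc (-T) T) := by
    rw [Metric.tendstoUniformlyOn_iff]
    intro e he
    filter_upwards with m t _
    simpa using he
  have htux : TendstoUniformlyOn (fun m t => X m t) x atTop (Set.Icc (-T) T) := by
    have h2 := hconst.add htu
    apply h2.congr
    filter_upwards with m t ht
    show t^n + ∑ k ∈ Finset.range m, d k t = X m t
    rw [hpart]
    ring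
  have hxc : ContinuousOn x (Set.Icc (-T) T) :=
    htux.continuousOn (Filter.Eventually.of_forall fun m => (hXc m).continuousOn).frequently
  have hpt : ∀ t ∈ Set.Icc (-T) T, Tendsto (fun m => X m t) atTop (𝓝 (x t)) :=
    fun t ht => htux.tendsto_at ht
  -- bound on the sum
  set C2 : ℝ := C * (1-θ)⁻¹ with hC2_def
  have h1θ : (0:ℝ) < 1 - θ := by linarith
  have hC2nn : 0 ≤ C2 := by
    rw [hC2_def]
    positivity
  have hSb : ∀ t ∈ Set.Icc (-T) T, |x t - t^n| ≤ C2 * W t := by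
    intro t ht
    have hsum0 : Summable (fun k : ℕ => C * θ^k * W t) := by
      apply Summable.congr ((summable_geometric_of_lt_one hθ0 hθ1).mul_left (C * W t))
      intro k
      ring
    have hsum1 : Summable (fun k => |d k t|) :=
      Summable.of_nonneg_of_le (fun k => abs_nonneg _) (fun k => hdk k t ht) hsum0
    have hxt : x t - t^n = S t := by simp only [hx_def]; ring
    rw [hxt]; simp only [hS_def]
    calc |∑' k, d k t| ≤ ∑' k, |d k t| := by
          have := norm_tsum_le_tsum_norm (f := fun k => d k t) (by simpa using hsum1)
          simpa using this
      _ ≤ ∑' k : ℕ, C * θ^k * W t := Summable.tsum_le_tsum (fun k => hdk k t ht) hsum1 hsum0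
      _ = (C * W t) * ∑' k : ℕ, θ^k := by
          rw [← tsum_mul_left]
          congr 1
          funext k
          ring
      _ = C2 * W t := by
          rw [tsum_geometric_of_lt_one hθ0 hθ1, hC2_def]
          ring
  -- a point where x is nonzero
  obtain ⟨t0, ht0lt, ht0mem⟩ : ∃ t0 : ℝ, C2 * (t0^ε * Real.exp (γ*t0)) < 1 ∧ t0 ∈ Set.Ioc 0 T := by
    have hcontat : ContinuousAt (fun t : ℝ => C2 * (t^ε * Real.exp (γ*t))) 0 := by
      apply ContinuousAt.mul continuousAt_const
      apply ContinuousAt.mul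
      · exact Real.continuousAt_rpow_const 0 ε (Or.inr hε0.le)
      · fun_prop
    have h0 : C2 * ((0:ℝ)^ε * Real.exp (γ*0)) = 0 := by
      rw [Real.zero_rpow (ne_of_gt hε0)]
      ring
    have htend : Tendsto (fun t : ℝ => C2 * (t^ε * Real.exp (γ*t))) (𝓝 0) (𝓝 0) := by
      have := hcontat.tendsto
      rwa [h0] at this
    have h1 : ∀ᶠ t in 𝓝[>] (0:ℝ), C2 * (t^ε * Real.exp (γ*t)) < 1 :=
      ((htend.mono_left nhdsWithin_le_nhds).eventually_lt_const one_pos)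
    have h2 : ∀ᶠ t in 𝓝[>] (0:ℝ), t ∈ Set.Ioc 0 T :=
      Ioc_mem_nhdsGT_of_mem ⟨le_refl 0, hT⟩
    exact (h1.and h2).exists
  have ht0Icc : t0 ∈ Set.Icc (-T) T := ⟨by linarith [ht0mem.1], ht0mem.2⟩
  have hxt0 : x t0 ≠ 0 := by
    have h1 := hSb t0 ht0Icc
    have habs : |t0| = t0 := abs_of_pos ht0mem.1
    have hW : W t0 = t0^n * (t0^ε * Real.exp (γ*t0)) := by
      simp only [hW_def]
      rw [habs]; ring
    have htpow : (0:ℝ) < t0^n := pow_pos ht0mem.1 n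
    have h2 : |x t0 - t0^n| < t0^n := by
      rw [hW] at h1
      calc |x t0 - t0^n| ≤ C2 * (t0^n * (t0^ε * Real.exp (γ*t0))) := h1
        _ = (C2 * (t0^ε * Real.exp (γ*t0))) * t0^n := by ring
        _ < 1 * t0^n := by
            exact mul_lt_mul_of_pos_right ht0lt htpow
        _ = t0^n := by ring
    intro hcontra
    rw [hcontra, zero_sub, abs_neg, abs_of_pos htpow] at h2
    exact lt_irrefl _ h2
  refine ⟨x, hxc, ⟨t0, ht0Icc, hxt0⟩, ?_⟩
  -- pass to the limit in the recursion
  intro t ht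
  have htT : |t| ≤ T := by rw [abs_le]; exact ⟨ht.1, ht.2⟩
  have hαtmem : α * t ∈ Set.Icc (-T) T := by
    apply hmem _ t _ ht
    rw [abs_mul, abs_of_pos hα0]
    calc α * |t| ≤ 1 * |t| := mul_le_mul_of_nonneg_right hα1.le (abs_nonneg t)
      _ = |t| := one_mul _
  have heqm : ∀ m : ℕ, lam * X (m+1) t
      = (∫ s in (0:ℝ)..t, K (t,s) * X m s) + a t * X m (α*t) := by
    intro m
    rw [hXs m t]
    field_simp
  have htend1 : Tendsto (fun m : ℕ => lam * X (m+1) t) atTop (𝓝 (lam * x t)) := by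
    apply Tendsto.const_mul
    exact (hpt t ht).comp (Filter.tendsto_add_atTop_nat 1)
  -- convergence of the integrals
  have hxint : IntervalIntegrable (fun s => K (t,s) * x s) MeasureTheory.volume 0 t := by
    apply ContinuousOn.intervalIntegrable
    apply ContinuousOn.mul
    · exact (hK.comp (continuous_const.prodMk continuous_id)).continuousOn
    · exact hxc.mono (huIcc_sub t ht)
  have hint : Tendsto (fun m : ℕ => ∫ s in (0:ℝ)..t, K (t,s) * X m s) atTop
      (𝓝 (∫ s in (0:ℝ)..t, K (t,s) * x s)) := by
    rw [Metric.tendsto_atTop]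
    intro e he
    have hMT : (0:ℝ) < M*T + 1 := by positivity
    have he2 : (0:ℝ) < e/(2*(M*T+1)) := by positivity
    obtain ⟨N, hN⟩ := Filter.eventually_atTop.1
      ((Metric.tendstoUniformlyOn_iff.1 htux) (e/(2*(M*T+1))) he2)
    refine ⟨N, fun m hm => ?_⟩
    have hXmint : IntervalIntegrable (fun s => K (t,s) * X m s) MeasureTheory.volume 0 t :=
      (Continuous.intervalIntegrable
        ((hK.comp (continuous_const.prodMk continuous_id)).mul (hXc m)) _ _)
    rw [Real.dist_eq]
    have hdiff : (∫ s in (0:ℝ)..t, K (t,s) * X m s) - ∫ s in (0:ℝ)..t, K (t,s) * x s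
        = ∫ s in (0:ℝ)..t, K (t,s) * (X m s - x s) := by
      rw [← intervalIntegral.integral_sub hXmint hxint]
      congr 1
      funext s
      ring
    rw [hdiff]
    have hb : ∀ s ∈ Set.uIoc 0 t, ‖K (t,s) * (X m s - x s)‖ ≤ M * (e/(2*(M*T+1))) := by
      intro s hs
      have hs' : s ∈ Set.uIcc 0 t := Set.uIoc_subset_uIcc hs
      have hsI : s ∈ Set.Icc (-T) T := hmem s t (habs_le t s hs') ht
      have hd := hN m hm s hsI
      rw [Real.dist_eq] at hd
      rw [Real.norm_eq_abs, abs_mul]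
      have : |X m s - x s| ≤ e/(2*(M*T+1)) := by
        rw [abs_sub_comm]
        exact le_of_lt hd
      exact mul_le_mul (hKb t ht s hsI) this (abs_nonneg _) hMpos.le
    have := intervalIntegral.norm_integral_le_of_norm_le_const hb
    rw [Real.norm_eq_abs] at this
    calc |∫ s in (0:ℝ)..t, K (t,s) * (X m s - x s)| ≤ M * (e/(2*(M*T+1))) * |t - 0| := this
      _ ≤ M * (e/(2*(M*T+1))) * T := by
          apply mul_le_mul_of_nonneg_left _ (by positivity)
          simpa using htT
      _ = e * ((M*T)/(2*(M*T+1))) := by ring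
      _ < e * 1 := by
          apply mul_lt_mul_of_pos_left _ he
          rw [div_lt_one (by positivity)]
          nlinarith
      _ = e := mul_one e
  have htend2 : Tendsto (fun m : ℕ => (∫ s in (0:ℝ)..t, K (t,s) * X m s) + a t * X m (α*t))
      atTop (𝓝 ((∫ s in (0:ℝ)..t, K (t,s) * x s) + a t * x (α*t))) :=
    hint.add (Tendsto.const_mul _ (hpt _ hαtmem))
  have hfinal : Tendsto (fun m : ℕ => lam * X (m+1) t) atTop
      (𝓝 ((∫ s in (0:ℝ)..t, K (t,s) * x s) + a t * x (α*t))) := by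
    have h4 : (fun m : ℕ => lam * X (m+1) t)
        = fun m : ℕ => (∫ s in (0:ℝ)..t, K (t,s) * X m s) + a t * X m (α*t) :=
      funext heqm
    rw [h4]
    exact htend2
  exact tendsto_nhds_unique htend1 hfinal
end

section
/- Let T > 0, let K : ℝ × ℝ → ℝ be continuous, let a : ℝ → ℝ be continuous with a(0) ≠ 0, let 0 < α < 1, let n be a natural number, let ε ∈ (0,1), and let 0 < q < 1 satisfy |a(t)|·α^ε ≤ q·|a(0)| for all t ∈ [0, T]. Define the weighted norm ‖v‖_L = max_{t ∈ [0,T]} e^(−L·t)·|v(t)| on the space of continuous functions v : [0, T] → ℝ, for L > 0. Define the linear operator B by (B v)(t) = (a(t)/a(0))·α^ε·v(α·t) + (1/(a(0)·α^n)) · ∫_0^t K(t,s)·(s/t)^(n+ε)·v(s) ds for t ∈ (0, T], with (B v)(0) = (a(0)/a(0))·α^ε·v(0). Then there exists L* > 0 such that for every L ≥ L* and every continuous v : [0, T] → ℝ, one has ‖B v‖_L ≤ q·‖v‖_L. -/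
open MeasureTheory Real

/-- The linear operator
`(B v)(t) = (a(t)/a(0)) α^ε v(α t) + (1/(a(0) α^n)) ∫_0^t K(t,s) (s/t)^(n+ε) v(s) ds`
for `t ∈ (0,T]`, with `(B v)(0) = (a(0)/a(0)) α^ε v(0)`. -/
noncomputable def Bop (K : ℝ × ℝ → ℝ) (a : ℝ → ℝ) (α : ℝ) (n : ℕ) (ε : ℝ)
    (v : ℝ → ℝ) : ℝ → ℝ := fun t =>
  if t = 0 then (a 0 / a 0) * α ^ ε * v 0
  else (a t / a 0) * α ^ ε * v (α * t) +
    (1 / (a 0 * α ^ n)) * ∫ s in (0 : ℝ)..t, K (t, s) * (s / t) ^ ((n : ℝ) + ε) * v s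

/-- The weighted norm `‖v‖_L = max_{t ∈ [0,T]} e^(-L t) |v(t)|` on `C[0,T]`. -/
noncomputable def weightedNorm (T L : ℝ) (v : ℝ → ℝ) : ℝ :=
  ⨆ t : Set.Icc (0 : ℝ) T, Real.exp (-L * t) * |v t|

lemma exp_convex_aux {α x : ℝ} (hα0 : 0 < α) (hα1 : α < 1) (hx : 0 ≤ x) :
    Real.exp (-((1 - α) * x)) ≤ (1 - α) * Real.exp (-x) + α := by
  have h := convexOn_exp.2 (Set.mem_univ (-x)) (Set.mem_univ (0 : ℝ))
    (by linarith : (0:ℝ) ≤ 1 - α) hα0.le (by ring)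
  simp only [smul_eq_mul, mul_zero, add_zero, Real.exp_zero, mul_one] at h
  calc Real.exp (-((1 - α) * x)) = Real.exp ((1 - α) * -x) := by ring_nf
    _ ≤ (1 - α) * Real.exp (-x) + α := h

/-- There exists `L* > 0` such that for all `L ≥ L*` the operator `B` is a
`q`-contraction with respect to the weighted norm `‖·‖_L`: `‖B v‖_L ≤ q ‖v‖_L`. -/
theorem contraction_in_weighted_norm
    (T : ℝ) (hT : 0 < T)
    (K : ℝ × ℝ → ℝ) (hK : Continuous K)
    (a : ℝ → ℝ) (ha : Continuous a) (ha0 : a 0 ≠ 0)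
    (α : ℝ) (hα0 : 0 < α) (hα1 : α < 1)
    (n : ℕ) (ε : ℝ) (hε : ε ∈ Set.Ioo (0 : ℝ) 1)
    (q : ℝ) (hq0 : 0 < q) (hq1 : q < 1)
    (haq : ∀ t ∈ Set.Icc (0 : ℝ) T, |a t| * α ^ ε ≤ q * |a 0|) :
    ∃ Lstar : ℝ, 0 < Lstar ∧ ∀ L : ℝ, Lstar ≤ L →
      ∀ v : ℝ → ℝ, ContinuousOn v (Set.Icc (0 : ℝ) T) →
        weightedNorm T L (Bop K a α n ε v) ≤ q * weightedNorm T L v := by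
  obtain ⟨hε0, hε1⟩ := hε
  have hβ : (0:ℝ) < 1 - α := by linarith
  have ha0' : 0 < |a 0| := abs_pos.mpr ha0
  have hαn : (0:ℝ) < α ^ n := pow_pos hα0 n
  have hαε : (0:ℝ) < α ^ ε := Real.rpow_pos_of_pos hα0 ε
  -- bound on K on the square
  obtain ⟨p0, hp0, hM'⟩ := (isCompact_Icc.prod isCompact_Icc :
      IsCompact (Set.Icc (0:ℝ) T ×ˢ Set.Icc (0:ℝ) T)).exists_isMaxOn
    ⟨((0:ℝ),(0:ℝ)), ⟨⟨le_refl _, hT.le⟩, ⟨le_refl _, hT.le⟩⟩⟩ hK.abs.continuousOn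
  have hM : ∀ p ∈ Set.Icc (0:ℝ) T ×ˢ Set.Icc (0:ℝ) T, |K p| ≤ |K p0| :=
    fun p hp => hM' hp
  set M := |K p0| with hMdef
  clear_value M
  have hM0 : 0 ≤ M := hMdef ▸ abs_nonneg _
  set C := M / (|a 0| * α ^ n) with hCdef
  clear_value C
  have hC0 : 0 ≤ C := hCdef ▸ div_nonneg hM0 (by positivity)
  refine ⟨max 1 (C / (q * (1 - α))), lt_of_lt_of_le one_pos (le_max_left _ _), ?_⟩
  intro L hL v hv
  have hL1 : (1:ℝ) ≤ L := le_trans (le_max_left _ _) hL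
  have hL0 : (0:ℝ) < L := lt_of_lt_of_le one_pos hL1
  have hCL : C ≤ L * (q * (1 - α)) :=
    (div_le_iff₀ (by positivity)).mp (le_trans (le_max_right _ _) hL)
  haveI : Nonempty (Set.Icc (0:ℝ) T) := ⟨⟨0, le_refl _, hT.le⟩⟩
  set Nv := weightedNorm T L v with hNvdef
  clear_value Nv
  have hbdd : BddAbove (Set.range fun t : Set.Icc (0:ℝ) T =>
      Real.exp (-L * t) * |v t|) := by
    apply IsCompact.bddAbove (isCompact_range ?_)
    exact (Real.continuous_exp.comp
      ((continuous_const.mul continuous_subtype_val))).mul hv.restrict.abs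
  have key : ∀ s, s ∈ Set.Icc (0:ℝ) T → Real.exp (-L * s) * |v s| ≤ Nv := by
    intro s hs
    rw [hNvdef, weightedNorm]
    exact le_ciSup hbdd ⟨s, hs⟩
  have hNv0 : 0 ≤ Nv := by
    rw [hNvdef, weightedNorm]
    exact Real.iSup_nonneg fun t => by positivity
  have keyv : ∀ s, s ∈ Set.Icc (0:ℝ) T → |v s| ≤ Real.exp (L * s) * Nv := by
    intro s hs
    have h := key s hs
    have heq : |v s| = Real.exp (L * s) * (Real.exp (-L * s) * |v s|) := by
      rw [← mul_assoc, ← Real.exp_add]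
      simp
    rw [heq]
    exact mul_le_mul_of_nonneg_left h (Real.exp_pos _).le
  rw [weightedNorm]
  apply ciSup_le
  rintro ⟨t, ht0, htT⟩
  simp only
  rcases eq_or_lt_of_le ht0 with h | h
  · -- t = 0
    have ht : t = 0 := h.symm
    subst ht
    have hq' : α ^ ε ≤ q := by
      have := haq 0 ⟨le_refl _, hT.le⟩
      nlinarith
    have hv0 : |v 0| ≤ Nv := by
      have := key 0 ⟨le_refl _, hT.le⟩
      simpa using this
    have hB : Bop K a α n ε v 0 = α ^ ε * v 0 := by
      rw [Bop]; simp [div_self ha0]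
    rw [hB]
    simp only [mul_zero, neg_zero, Real.exp_zero, one_mul, abs_mul,
      abs_of_pos hαε]
    nlinarith
  · -- 0 < t
    have htne : t ≠ 0 := ne_of_gt h
    rw [Bop]
    simp only [if_neg htne]
    set I := ∫ s in (0:ℝ)..t, K (t, s) * (s / t) ^ ((n : ℝ) + ε) * v s with hI
    clear_value I
    -- bound the integral
    have hfc : ContinuousOn (fun s => K (t, s) * (s / t) ^ ((n : ℝ) + ε) * v s)
        (Set.Icc 0 t) := by
      apply ContinuousOn.mul
      apply ContinuousOn.mul
      · exact (hK.comp (Continuous.prodMk_right t)).continuousOn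
      · exact ((Real.continuous_rpow_const (by positivity)).comp
          (continuous_id.div_const t)).continuousOn
      · exact hv.mono (Set.Icc_subset_Icc (le_refl _) htT)
    have hfint : IntervalIntegrable
        (fun s => K (t, s) * (s / t) ^ ((n : ℝ) + ε) * v s) volume 0 t :=
      (hfc.mono (by rw [Set.uIcc_of_le h.le])).intervalIntegrable
    have hgint : IntervalIntegrable (fun s => M * (Real.exp (L * s) * Nv))
        volume 0 t :=
      Continuous.intervalIntegrable (continuous_const.mul
        ((Real.continuous_exp.comp (continuous_const.mul continuous_id)).mul
          continuous_const)) 0 t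
    have habs : |I| ≤ ∫ s in (0:ℝ)..t, M * (Real.exp (L * s) * Nv) := by
      rw [hI]
      refine le_trans (intervalIntegral.abs_integral_le_integral_abs h.le) ?_
      apply intervalIntegral.integral_mono_on h.le hfint.abs hgint
      intro s hs
      have hs0 : 0 ≤ s := hs.1
      have hst : s ≤ t := hs.2
      have hr0 : 0 ≤ (s / t) ^ ((n : ℝ) + ε) := Real.rpow_nonneg (by positivity) _
      have hr1 : (s / t) ^ ((n : ℝ) + ε) ≤ 1 :=
        Real.rpow_le_one (by positivity) (by rw [div_le_one h]; exact hst)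
          (by positivity)
      have hKb : |K (t, s)| ≤ M := hM (t, s) ⟨⟨h.le, htT⟩, hs0, le_trans hst htT⟩
      have hvb : |v s| ≤ Real.exp (L * s) * Nv :=
        keyv s ⟨hs0, le_trans hst htT⟩
      have he : (0:ℝ) < Real.exp (L * s) := Real.exp_pos _
      calc |K (t, s) * (s / t) ^ ((n : ℝ) + ε) * v s|
          = |K (t, s)| * (s / t) ^ ((n : ℝ) + ε) * |v s| := by
            rw [abs_mul, abs_mul, abs_of_nonneg hr0]
        _ ≤ (M * 1) * (Real.exp (L * s) * Nv) := by
            apply mul_le_mul (mul_le_mul hKb hr1 hr0 hM0) hvb (abs_nonneg _)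
              (by positivity)
        _ = M * (Real.exp (L * s) * Nv) := by ring
    have hexp : (∫ s in (0:ℝ)..t, Real.exp (L * s)) =
        (Real.exp (L * t) - 1) / L := by
      have : ∀ x ∈ Set.uIcc (0:ℝ) t, HasDerivAt (fun s => Real.exp (L * s) / L)
          (Real.exp (L * x)) x := by
        intro x _
        have h1 : HasDerivAt (fun s : ℝ => L * s) L x := by
          simpa using (hasDerivAt_id x).const_mul L
        have h2 := (Real.hasDerivAt_exp (L * x)).comp x h1
        have h3 := h2.div_const L
        have h4 : Real.exp (L * x) * L / L = Real.exp (L * x) := by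
          field_simp
        rw [h4] at h3
        exact h3
      rw [intervalIntegral.integral_eq_sub_of_hasDerivAt this
        ((Real.continuous_exp.comp
          (continuous_const.mul continuous_id)).intervalIntegrable 0 t)]
      simp [sub_div]
    have hIbound : |I| ≤ M * Nv * ((Real.exp (L * t) - 1) / L) := by
      refine le_trans habs ?_
      have : (∫ s in (0:ℝ)..t, M * (Real.exp (L * s) * Nv)) =
          M * Nv * ((Real.exp (L * t) - 1) / L) := by
        rw [show (fun s => M * (Real.exp (L * s) * Nv)) =
          fun s => (M * Nv) * Real.exp (L * s) by funext s; ring]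
        rw [intervalIntegral.integral_const_mul, hexp]
      rw [this]
    -- main estimate
    have haqt := haq t ⟨h.le, htT⟩
    have hvαt : Real.exp (-L * (α * t)) * |v (α * t)| ≤ Nv :=
      key (α * t) ⟨by positivity, le_trans (by nlinarith) htT⟩
    have hE0 : (0:ℝ) < Real.exp (-L * t) := Real.exp_pos _
    have hE1 : Real.exp (-L * t) ≤ 1 := Real.exp_le_one_iff.mpr (by nlinarith)
    have hconv := exp_convex_aux hα0 hα1 (show (0:ℝ) ≤ L * t by positivity)
    -- term 1
    have hterm1 : Real.exp (-L * t) * |(a t / a 0) * α ^ ε * v (α * t)| ≤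
        q * (Real.exp (-((1 - α) * (L * t))) * Nv) := by
      have hsplit : Real.exp (-L * t) =
          Real.exp (-((1 - α) * (L * t))) * Real.exp (-L * (α * t)) := by
        rw [← Real.exp_add]; ring_nf
      have habs1 : |(a t / a 0) * α ^ ε * v (α * t)| =
          (|a t| / |a 0|) * α ^ ε * |v (α * t)| := by
        rw [abs_mul, abs_mul, abs_div, abs_of_pos hαε]
      rw [habs1, hsplit]
      have h1 : |a t| / |a 0| * α ^ ε ≤ q := by
        rw [div_mul_eq_mul_div, div_le_iff₀ ha0']
        linarith [haqt]
      have h2 : Real.exp (-L * (α * t)) * |v (α * t)| ≤ Nv := hvαt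
      have he1 : (0:ℝ) < Real.exp (-((1 - α) * (L * t))) := Real.exp_pos _
      have he2 : (0:ℝ) < Real.exp (-L * (α * t)) := Real.exp_pos _
      have hnn : 0 ≤ |a t| / |a 0| * α ^ ε := by positivity
      calc Real.exp (-((1 - α) * (L * t))) * Real.exp (-L * (α * t)) *
            (|a t| / |a 0| * α ^ ε * |v (α * t)|)
          = (|a t| / |a 0| * α ^ ε) * (Real.exp (-((1 - α) * (L * t))) *
            (Real.exp (-L * (α * t)) * |v (α * t)|)) := by ring
        _ ≤ q * (Real.exp (-((1 - α) * (L * t))) * Nv) := by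
            apply mul_le_mul h1 _ (by positivity) hq0.le
            exact mul_le_mul_of_nonneg_left h2 he1.le
    -- term 2
    have hterm2 : Real.exp (-L * t) * |(1 / (a 0 * α ^ n)) * I| ≤
        C * ((1 - Real.exp (-L * t)) / L) * Nv := by
      rw [abs_mul]
      have hcoef : |1 / (a 0 * α ^ n)| = 1 / (|a 0| * α ^ n) := by
        rw [abs_div, abs_one, abs_mul, abs_of_pos hαn]
      rw [hcoef]
      have hEe : Real.exp (-L * t) * (Real.exp (L * t) - 1) =
          1 - Real.exp (-L * t) := by
        rw [mul_sub, ← Real.exp_add]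
        simp
      have h1 : Real.exp (-L * t) * (1 / (|a 0| * α ^ n) * |I|) ≤
          Real.exp (-L * t) * (1 / (|a 0| * α ^ n) *
            (M * Nv * ((Real.exp (L * t) - 1) / L))) := by
        apply mul_le_mul_of_nonneg_left _ hE0.le
        apply mul_le_mul_of_nonneg_left hIbound (by positivity)
      refine le_trans h1 (le_of_eq ?_)
      rw [hCdef]
      rw [show Real.exp (-L * t) * (1 / (|a 0| * α ^ n) *
          (M * Nv * ((Real.exp (L * t) - 1) / L))) =
        M / (|a 0| * α ^ n) *
          ((Real.exp (-L * t) * (Real.exp (L * t) - 1)) / L) * Nv from by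
            ring]
      rw [hEe]
    -- combine
    calc Real.exp (-L * t) * |(a t / a 0) * α ^ ε * v (α * t) +
          (1 / (a 0 * α ^ n)) * I|
        ≤ Real.exp (-L * t) * (|(a t / a 0) * α ^ ε * v (α * t)| +
          |(1 / (a 0 * α ^ n)) * I|) := by
          apply mul_le_mul_of_nonneg_left (abs_add_le _ _) hE0.le
      _ = Real.exp (-L * t) * |(a t / a 0) * α ^ ε * v (α * t)| +
          Real.exp (-L * t) * |(1 / (a 0 * α ^ n)) * I| := by ring
      _ ≤ q * (Real.exp (-((1 - α) * (L * t))) * Nv) +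
          C * ((1 - Real.exp (-L * t)) / L) * Nv := add_le_add hterm1 hterm2
      _ ≤ q * Nv := by
          have h1E : 0 ≤ 1 - Real.exp (-L * t) := by linarith
          have hconv' : Real.exp (-((1 - α) * (L * t))) ≤
              (1 - α) * Real.exp (-L * t) + α := by
            rw [show (-L * t : ℝ) = -(L * t) from by ring]
            exact hconv
          have hCL2 : C * ((1 - Real.exp (-L * t)) / L) ≤
              q * (1 - α) * (1 - Real.exp (-L * t)) := by
            calc C * ((1 - Real.exp (-L * t)) / L)
                = C * (1 - Real.exp (-L * t)) / L := by ring
              _ ≤ L * (q * (1 - α)) * (1 - Real.exp (-L * t)) / L := by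
                  gcongr
              _ = q * (1 - α) * (1 - Real.exp (-L * t)) := by
                  field_simp
          have hA : q * (Real.exp (-((1 - α) * (L * t))) * Nv) ≤
              q * (((1 - α) * Real.exp (-L * t) + α) * Nv) :=
            mul_le_mul_of_nonneg_left
              (mul_le_mul_of_nonneg_right hconv' hNv0) hq0.le
          have hB : C * ((1 - Real.exp (-L * t)) / L) * Nv ≤
              q * (1 - α) * (1 - Real.exp (-L * t)) * Nv :=
            mul_le_mul_of_nonneg_right hCL2 hNv0
          have hsum : q * (((1 - α) * Real.exp (-L * t) + α) * Nv) +
              q * (1 - α) * (1 - Real.exp (-L * t)) * Nv = q * Nv := by ring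
          linarith
end

section
/- Define sequences (b_i) and (m_i) of real numbers by: b_1 = 4/ln 2, and b_i = b_{i−1} / (i·(1 − 1/2^i)) for i ≥ 2; m_1 = (−(ln 2)·(1/2)·b_1 − 2/ln 2) / (1 − 1/2), and m_i = (−(ln 2)·(1/2^i)·b_i + m_{i−1}/i − b_{i−1}/i²) / (1 − 1/2^i) for i ≥ 2. Then both power series Σ_{i=1}^∞ b_i·t^i and Σ_{i=1}^∞ m_i·t^i converge for every real t (infinite radius of convergence). -/
set_option maxHeartbeats 1600000 in
/-- The coefficient sequences `(b_i)` and `(m_i)` of the particular solution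
`x̂(t) = 1 + Σ m_i t^i + ln t (2/ln 2 + Σ b_i t^i)` of the inhomogeneous equation
give power series with infinite radius of convergence. -/
theorem particular_solution_coefficients_summable
    (b m : ℕ → ℝ)
    (hb1 : b 1 = 4 / Real.log 2)
    (hbrec : ∀ i : ℕ, 2 ≤ i → b i = b (i - 1) / (i * (1 - 1 / 2 ^ i)))
    (hm1 : m 1 = (-(Real.log 2) * (1 / 2) * b 1 - 2 / Real.log 2) / (1 - 1 / 2))
    (hmrec : ∀ i : ℕ, 2 ≤ i →
      m i = (-(Real.log 2) * (1 / 2 ^ i) * b i + m (i - 1) / i - b (i - 1) / (i : ℝ) ^ 2) /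
        (1 - 1 / 2 ^ i)) :
    ∀ t : ℝ, Summable (fun i : ℕ => b (i + 1) * t ^ (i + 1)) ∧
      Summable (fun i : ℕ => m (i + 1) * t ^ (i + 1)) := by
  have hlog : (0:ℝ) < Real.log 2 := Real.log_pos (by norm_num)
  set C := |b 1| with hCdef
  set D := |m 1| + (4 * Real.log 2 + 2) * C with hDdef
  have hC0 : 0 ≤ C := abs_nonneg _
  have hD0 : 0 ≤ D := by positivity
  have hD' : (4 * Real.log 2 + 2) * C ≤ D := by
    have := abs_nonneg (m 1); rw [hDdef]; linarith
  have key : ∀ i : ℕ, 1 ≤ i →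
      |b i| ≤ C * 2 ^ i / (i.factorial : ℝ) ∧ |m i| ≤ D * 4 ^ i / (i.factorial : ℝ) := by
    intro i hi
    induction i, hi using Nat.le_induction with
    | base =>
      constructor
      · simp [Nat.factorial]
        nlinarith [abs_nonneg (b 1)]
      · simp [Nat.factorial]
        nlinarith [abs_nonneg (m 1), abs_nonneg (b 1), hlog]
    | succ i hi IH =>
      obtain ⟨IHb, IHm⟩ := IH
      have hf : (0:ℝ) < (i.factorial : ℝ) := by positivity
      set f : ℝ := (i.factorial : ℝ) with hfdef
      have hg2 : (2:ℝ) ≤ (i:ℝ) + 1 := by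
        have : (1:ℝ) ≤ (i:ℝ) := by exact_mod_cast hi
        linarith
      set g : ℝ := (i:ℝ) + 1 with hgdef
      have hg0 : (0:ℝ) < g := by linarith
      have hP2 : (2:ℝ) ≤ 2 ^ (i+1) := by
        calc (2:ℝ) = 2 ^ 1 := (pow_one 2).symm
        _ ≤ 2 ^ (i+1) := pow_le_pow_right₀ one_le_two (by omega)
      set P : ℝ := 2 ^ (i+1) with hPdef
      have hP0 : (0:ℝ) < P := by positivity
      have hPinv : 1 / P ≤ 1 / 2 := by
        apply one_div_le_one_div_of_le <;> linarith
      have he : (1:ℝ)/2 ≤ 1 - 1/P := by linarith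
      have he0 : (0:ℝ) < 1 - 1/P := by linarith
      have hfact : (((i+1).factorial : ℕ) : ℝ) = g * f := by
        rw [Nat.factorial_succ]; push_cast; ring
      have hgf0 : (0:ℝ) < g * f := by positivity
      have IHb' : |b i| * f ≤ C * 2 ^ i := (le_div_iff₀ hf).mp IHb
      have IHm' : |m i| * f ≤ D * 4 ^ i := (le_div_iff₀ hf).mp IHm
      -- recursion for b
      have hb : b (i+1) = b i / (g * (1 - 1/P)) := by
        have h := hbrec (i+1) (by omega)
        simp only [Nat.add_sub_cancel] at h
        rw [h]; push_cast [hgdef, hPdef]; ring_nf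
      have claim_b : |b (i+1)| ≤ C * 2 ^ (i+1) / (((i+1).factorial : ℕ) : ℝ) := by
        rw [hfact, hb, abs_div, abs_of_pos (by positivity : (0:ℝ) < g * (1 - 1/P))]
        rw [div_le_div_iff₀ (by positivity) hgf0]
        calc |b i| * (g * f) = (|b i| * f) * g := by ring
          _ ≤ (C * 2 ^ i) * g := mul_le_mul_of_nonneg_right IHb' hg0.le
          _ = (C * 2 ^ (i+1)) * (g * (1/2)) := by rw [pow_succ]; ring
          _ ≤ (C * 2 ^ (i+1)) * (g * (1 - 1/P)) := by
              exact mul_le_mul_of_nonneg_left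
                (mul_le_mul_of_nonneg_left he hg0.le) (by positivity)
      -- recursion for m
      have hm : m (i+1) = (-(Real.log 2) * (1/P) * b (i+1) + m i / g - b i / g ^ 2) / (1 - 1/P) := by
        have h := hmrec (i+1) (by omega)
        simp only [Nat.add_sub_cancel] at h
        rw [h]; push_cast [hgdef, hPdef]; ring_nf
      have claim_m : |m (i+1)| ≤ D * 4 ^ (i+1) / (((i+1).factorial : ℕ) : ℝ) := by
        rw [hfact, hm, abs_div, abs_of_pos he0]
        set num : ℝ := -(Real.log 2) * (1/P) * b (i+1) + m i / g - b i / g ^ 2 with hnumdef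
        have hbi1 : |b (i+1)| ≤ C * P / (g * f) := by
          rw [hfact] at claim_b; exact claim_b
        have hnum : |num| ≤ Real.log 2 * C / (g * f) + D * 4 ^ i / (g * f)
            + C * 2 ^ i / (2 * (g * f)) := by
          have tri : |num| ≤ |(-(Real.log 2)) * (1/P) * b (i+1)| + |m i / g| + |b i / g ^ 2| := by
            rw [hnumdef]
            calc |(-(Real.log 2)) * (1/P) * b (i+1) + m i / g - b i / g ^ 2|
                ≤ |(-(Real.log 2)) * (1/P) * b (i+1) + m i / g| + |b i / g ^ 2| := abs_sub _ _
              _ ≤ |(-(Real.log 2)) * (1/P) * b (i+1)| + |m i / g| + |b i / g ^ 2| := by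
                  have := abs_add_le ((-(Real.log 2)) * (1/P) * b (i+1)) (m i / g)
                  linarith
          have e1 : |(-(Real.log 2)) * (1/P) * b (i+1)| = Real.log 2 * |b (i+1)| / P := by
            rw [abs_mul, abs_mul, abs_neg, abs_of_pos hlog,
              abs_of_pos (by positivity : (0:ℝ) < 1/P)]
            ring
          have e2 : |m i / g| = |m i| / g := by
            rw [abs_div, abs_of_pos hg0]
          have e3 : |b i / g ^ 2| = |b i| / g ^ 2 := by
            rw [abs_div, abs_of_pos (by positivity : (0:ℝ) < g ^ 2)]
          rw [e1, e2, e3] at tri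
          have h1 : Real.log 2 * |b (i+1)| / P ≤ Real.log 2 * C / (g * f) := by
            have h1a : Real.log 2 * |b (i+1)| / P ≤ Real.log 2 * (C * P / (g * f)) / P := by
              gcongr
            have h1b : Real.log 2 * (C * P / (g * f)) / P = Real.log 2 * C / (g * f) := by
              field_simp
            linarith
          have h2 : |m i| / g ≤ D * 4 ^ i / (g * f) := by
            rw [div_le_div_iff₀ hg0 hgf0]
            calc |m i| * (g * f) = (|m i| * f) * g := by ring
              _ ≤ (D * 4 ^ i) * g := mul_le_mul_of_nonneg_right IHm' hg0.le
              _ = D * 4 ^ i * g := by ring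
          have h3 : |b i| / g ^ 2 ≤ C * 2 ^ i / (2 * (g * f)) := by
            rw [div_le_div_iff₀ (by positivity) (by positivity)]
            calc |b i| * (2 * (g * f)) = (|b i| * f) * (2 * g) := by ring
              _ ≤ (C * 2 ^ i) * (2 * g) := mul_le_mul_of_nonneg_right IHb' (by positivity)
              _ ≤ (C * 2 ^ i) * (g * g) := by
                  have : 2 * g ≤ g * g := by nlinarith
                  exact mul_le_mul_of_nonneg_left this (by positivity)
              _ = C * 2 ^ i * g ^ 2 := by ring
          linarith
        have hnum2 : |num| ≤ (Real.log 2 * C + D * 4 ^ i + C * 2 ^ i / 2) / (g * f) := by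
          have heq : Real.log 2 * C / (g * f) + D * 4 ^ i / (g * f) + C * 2 ^ i / (2 * (g * f))
              = (Real.log 2 * C + D * 4 ^ i + C * 2 ^ i / 2) / (g * f) := by
            field_simp
          exact hnum.trans heq.le
        have hNle : 2 * (Real.log 2 * C + D * 4 ^ i + C * 2 ^ i / 2) ≤ D * 4 ^ (i+1) := by
          have h4i1 : (1:ℝ) ≤ 4 ^ i := by
            simpa using pow_le_pow_left₀ (by norm_num : (0:ℝ) ≤ 1) (by norm_num : (1:ℝ) ≤ 4) i
          have h24 : (2:ℝ) ^ i ≤ 4 ^ i := pow_le_pow_left₀ (by norm_num) (by norm_num) i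
          have h4i : (0:ℝ) ≤ 4 ^ i := by positivity
          have hA : (4 * Real.log 2 + 2) * C * 4 ^ i ≤ D * 4 ^ i :=
            mul_le_mul_of_nonneg_right hD' h4i
          have hl : Real.log 2 * C ≤ Real.log 2 * C * 4 ^ i :=
            le_mul_of_one_le_right (by positivity) h4i1
          have hc2 : C * 2 ^ i ≤ C * 4 ^ i := mul_le_mul_of_nonneg_left h24 hC0
          have hz0 : (0:ℝ) ≤ C * 2 ^ i := by positivity
          have hl0 : (0:ℝ) ≤ Real.log 2 * C := by positivity
          rw [pow_succ]
          clear_value C D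
          linarith
        have step1 : |num| / (1 - 1/P) ≤ 2 * |num| := by
          rw [div_le_iff₀ he0]
          have := mul_le_mul_of_nonneg_left he (abs_nonneg num)
          nlinarith [abs_nonneg num]
        have step2 : 2 * |num| ≤ D * 4 ^ (i+1) / (g * f) := by
          calc 2 * |num| ≤ 2 * ((Real.log 2 * C + D * 4 ^ i + C * 2 ^ i / 2) / (g * f)) := by
                linarith
            _ = (2 * (Real.log 2 * C + D * 4 ^ i + C * 2 ^ i / 2)) / (g * f) := by ring
            _ ≤ D * 4 ^ (i+1) / (g * f) := by
                exact (div_le_div_iff_of_pos_right hgf0).mpr hNle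
        linarith
      exact ⟨claim_b, claim_m⟩
  intro t
  have mk : ∀ (c : ℕ → ℝ) (K r : ℝ), 0 ≤ K → 0 ≤ r →
      (∀ n : ℕ, |c (n+1)| ≤ K * r ^ (n+1) / ((n+1).factorial : ℝ)) →
      Summable (fun n : ℕ => c (n + 1) * t ^ (n + 1)) := by
    intro c K r hK hr hc
    have hs : Summable (fun n : ℕ => K * ((r * |t|) ^ (n+1) / (((n+1).factorial : ℕ) : ℝ))) := by
      have h0 : Summable (fun n : ℕ => K * ((r * |t|) ^ n / ((n.factorial : ℕ) : ℝ))) :=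
        (Real.summable_pow_div_factorial (r * |t|)).mul_left K
      exact (summable_nat_add_iff 1).mpr h0
    refine Summable.of_abs (Summable.of_nonneg_of_le (fun n => abs_nonneg _) (fun n => ?_) hs)
    rw [abs_mul, abs_pow]
    calc |c (n+1)| * |t| ^ (n+1)
        ≤ (K * r ^ (n+1) / ((n+1).factorial : ℝ)) * |t| ^ (n+1) := by
          exact mul_le_mul_of_nonneg_right (hc n) (by positivity)
      _ = K * ((r * |t|) ^ (n+1) / (((n+1).factorial : ℕ) : ℝ)) := by
          rw [mul_pow]; ring
  constructor
  · exact mk b C 2 hC0 (by norm_num) (fun n => (key (n+1) (by omega)).1)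
  · exact mk m D 4 hD0 (by norm_num) (fun n => (key (n+1) (by omega)).2)
end
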